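/- arXiv:2412.04389 — 4 statements merged into one kernel-verified Lean document; each statement's English description precedes it below -/
import Mathlib

section
/- If M = (v_1h_1, \ldots, v_mh_m) is a C-matching in IG(H), then its retrograde (h_mv_m, h_{m-1}v_{m-1}, \ldots, h_1v_1) is a C-matching in IG(H^*), where H^* is the dual hypergraph of H. -/
open scoped Classical

section Defs

variable {V E : Type*}

/-- The set of vertices eventually burned when `B` is initially burned:
a vertex burns if it is initially burned, or if some hyperedge contains it and
all other vertices of that hyperedge are burned. -/
inductive Burns (edges : E → Finset V) (B : Set V) : V → Prop
  | init (v : V) : v ∈ B → Burns edges B v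
  | spread (h : E) (v : V) : v ∈ edges h →
      (∀ u, u ∈ edges h → u ≠ v → Burns edges B u) → Burns edges B v

/-- `B` is a lazy burning set if every vertex eventually burns. -/
def IsLazyBurningSet (edges : E → Finset V) (B : Set V) : Prop :=
  ∀ v, Burns edges B v

/-- The lazy burning number: minimum size of a lazy burning set. -/
noncomputable def lazyBurningNumber [Fintype V] (edges : E → Finset V) : ℕ :=
  sInf {n | ∃ B : Finset V, B.card = n ∧ IsLazyBurningSet edges ↑B}

/-- A `C`-matching in the incidence graph: a list of incidence pairs `(vᵢ, hᵢ)`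
with the `vᵢ` distinct, such that `hᵢ` contains none of the later vertices. -/
def IsCMatching (edges : E → Finset V) (L : List (V × E)) : Prop :=
  (∀ p ∈ L, p.1 ∈ edges p.2) ∧ (L.map Prod.fst).Nodup ∧
  ∀ i j (hi : i < L.length) (hj : j < L.length), i < j →
    (L.get ⟨j, hj⟩).1 ∉ edges (L.get ⟨i, hi⟩).2

/-- `m(H)`: maximum cardinality (length) of a `C`-matching. -/
noncomputable def maxCMatching (edges : E → Finset V) : ℕ :=
  sSup {k | ∃ L : List (V × E), IsCMatching edges L ∧ L.length = k}

/-- A chronological list of lazy burnings starting from `B0`: a list of pairs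
`(hᵢ, vᵢ)` with `vᵢ ∈ hᵢ` and `hᵢ \ {vᵢ} ⊆ B_{i-1} = B0 ∪ {v₁, …, v_{i-1}}`. -/
def IsChronList (edges : E → Finset V) (B0 : Set V) (L : List (E × V)) : Prop :=
  ∀ i (hi : i < L.length),
    (L.get ⟨i, hi⟩).2 ∈ edges (L.get ⟨i, hi⟩).1 ∧
    ∀ u, u ∈ edges (L.get ⟨i, hi⟩).1 → u ≠ (L.get ⟨i, hi⟩).2 →
      u ∈ B0 ∨ ∃ j, ∃ hj : j < L.length, j < i ∧ u = (L.get ⟨j, hj⟩).2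

/-- The dual hypergraph: vertices are the hyperedges of `H`, and for each vertex
`v` of `H` there is a hyperedge `N(v) = {h : v ∈ h}`. -/
noncomputable def dualEdges [Fintype E] (edges : E → Finset V) (v : V) : Finset E :=
  Finset.univ.filter (fun h => v ∈ edges h)

/-- `U` induces a subhypergraph all of whose hyperedges have cardinality `> 1`. -/
def GoodSet (edges : E → Finset V) (U : Finset V) : Prop :=
  ∀ h : E, ((edges h) ∩ U).Nonempty → 1 < ((edges h) ∩ U).card

/-- The vertex set of the core of `H`: the maximum induced subhypergraph all of
whose hyperedges have cardinality `> 1`. -/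
noncomputable def coreSet [Fintype V] (edges : E → Finset V) : Finset V :=
  (Finset.univ : Finset V).powerset.sup (fun U => if GoodSet edges U then U else ∅)

/-- The zero forcing closure: a black vertex `u` with unique white neighbor `v`
forces `v`. -/
inductive ZFClosure {α : Type*} (G : SimpleGraph α) (B : Set α) : α → Prop
  | init (v : α) : v ∈ B → ZFClosure G B v
  | force (u v : α) : ZFClosure G B u → G.Adj u v →
      (∀ w, G.Adj u w → w ≠ v → ZFClosure G B w) → ZFClosure G B v

def IsZeroForcingSet {α : Type*} (G : SimpleGraph α) (B : Set α) : Prop :=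
  ∀ v, ZFClosure G B v

noncomputable def zeroForcingNumber {α : Type*} [Fintype α] (G : SimpleGraph α) : ℕ :=
  sInf {n | ∃ B : Finset α, B.card = n ∧ IsZeroForcingSet G ↑B}

/-- The skew zero forcing closure: any vertex `u` (black or white) with a unique
white neighbor `v` forces `v`. -/
inductive SkewZFClosure {α : Type*} (G : SimpleGraph α) (B : Set α) : α → Prop
  | init (v : α) : v ∈ B → SkewZFClosure G B v
  | force (u v : α) : G.Adj u v →
      (∀ w, G.Adj u w → w ≠ v → SkewZFClosure G B w) → SkewZFClosure G B v

def IsSkewZeroForcingSet {α : Type*} (G : SimpleGraph α) (B : Set α) : Prop :=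
  ∀ v, SkewZFClosure G B v

noncomputable def skewZeroForcingNumber {α : Type*} [Fintype α] (G : SimpleGraph α) : ℕ :=
  sInf {n | ∃ B : Finset α, B.card = n ∧ IsSkewZeroForcingSet G ↑B}

/-- The incidence (Levi) graph of a hypergraph. -/
def incidenceGraph (edges : E → Finset V) : SimpleGraph (V ⊕ E) where
  Adj x y := (∃ v h, x = Sum.inl v ∧ y = Sum.inr h ∧ v ∈ edges h) ∨
             (∃ v h, x = Sum.inr h ∧ y = Sum.inl v ∧ v ∈ edges h)
  symm := by
    refine ⟨?_⟩
    rintro x y (⟨v, h, rfl, rfl, hm⟩ | ⟨v, h, rfl, rfl, hm⟩)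
    · exact Or.inr ⟨v, h, rfl, rfl, hm⟩
    · exact Or.inl ⟨v, h, rfl, rfl, hm⟩
  loopless := by
    refine ⟨?_⟩
    rintro x (⟨v, h, h1, h2, _⟩ | ⟨v, h, h1, h2, _⟩) <;> subst h1 <;> simp_all

/-- The star `K_{1,j}` with center `0`. -/
def starGraph (j : ℕ) : SimpleGraph (Fin (j + 1)) where
  Adj a b := a ≠ b ∧ (a = 0 ∨ b = 0)
  symm := ⟨fun _ _ ⟨hne, hor⟩ => ⟨hne.symm, hor.symm⟩⟩
  loopless := ⟨fun _ ha => ha.1 rfl⟩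

end Defs

theorem stmt3 {V E : Type*} [Fintype E] (edges : E → Finset V) (L : List (V × E))
    (hL : IsCMatching edges L) :
    IsCMatching (dualEdges edges) (L.reverse.map Prod.swap) := by
  obtain ⟨h1, h2, h3⟩ := hL
  have hget : ∀ i (hi : i < (L.reverse.map Prod.swap).length),
      (L.reverse.map Prod.swap).get ⟨i, hi⟩ =
        Prod.swap (L.get ⟨L.length - 1 - i,
          by simp at hi; omega⟩) := by
    intro i hi
    have hi' : i < L.length := by simpa using hi
    simp [List.getElem_map, List.getElem_reverse]
  refine ⟨?_, ?_, ?_⟩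
  · intro p hp
    simp only [List.mem_map, List.mem_reverse] at hp
    obtain ⟨q, hq, rfl⟩ := hp
    simp [dualEdges, h1 q hq]
  · have hnd : (L.map Prod.snd).Nodup := by
      rw [List.nodup_iff_injective_get]
      intro i j hij
      by_contra hne
      have hne' : (i : ℕ) ≠ (j : ℕ) := fun h => hne (Fin.ext h)
      simp only [List.get_eq_getElem, List.getElem_map] at hij
      have hi : (i : ℕ) < L.length := by have := i.2; simpa using this
      have hj : (j : ℕ) < L.length := by have := j.2; simpa using this
      rcases lt_or_gt_of_ne hne' with h | h
      · have := h3 i j hi hj h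
        simp only [List.get_eq_getElem] at this; rw [hij] at this
        exact this (h1 _ (List.getElem_mem hj))
      · have := h3 j i hj hi h
        simp only [List.get_eq_getElem] at this; rw [← hij] at this
        exact this (h1 _ (List.getElem_mem hi))
    have : (L.reverse.map Prod.swap).map Prod.fst = (L.map Prod.snd).reverse := by
      rw [List.map_map, ← List.map_reverse]
      rfl
    rw [this]
    exact List.nodup_reverse.mpr hnd
  · intro i j hi hj hij
    rw [hget i hi, hget j hj]
    have hj' : j < L.length := by simpa using hj
    have hlt : L.length - 1 - j < L.length - 1 - i := by omega
    have hjl : L.length - 1 - j < L.length := by omega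
    have hil : L.length - 1 - i < L.length := by omega
    have := h3 _ _ hjl hil hlt
    simp only [Prod.fst_swap, Prod.snd_swap]
    simp [dualEdges]
    exact fun hmem => this hmem
end

section
/- Let H be a hypergraph in which any two distinct hyperedges intersect in at most \overline{\lambda} vertices, and let \overline{D}_t be the minimum possible sum of the cardinalities of t distinct hyperedges of H. Then for every t with 1 \le t \le m(H), b_L(H) \ge \overline{D}_t - \overline{\lambda}\binom{t}{2} - t. -/
open scoped Classical

section Aux

variable {V E : Type*}

private lemma burns_mono' {edges : E → Finset V} {B B' : Set V} (hBB : B ⊆ B') :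
    ∀ {v}, Burns edges B v → Burns edges B' v := by
  intro v hb
  induction hb with
  | init v hv => exact Burns.init v (hBB hv)
  | spread h v hv hall ih => exact Burns.spread h v hv (fun u hu hne => ih u hu hne)

private lemma exists_forced' {edges : E → Finset V} {B : Set V} {v : V}
    (hb : Burns edges B v) :
    v ∈ B ∨ ∃ e u, u ∉ B ∧ u ∈ edges e ∧ ∀ w ∈ edges e, w ≠ u → w ∈ B := by
  induction hb with
  | init v hv => exact Or.inl hv
  | spread h v hv hall ih =>
    by_cases hvB : v ∈ B
    · exact Or.inl hvB
    · by_cases hall' : ∀ u ∈ edges h, u ≠ v → u ∈ B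
      · exact Or.inr ⟨h, v, hvB, hv, hall'⟩
      · push_neg at hall'
        obtain ⟨u, hu, hune, huB⟩ := hall'
        rcases ih u hu hune with h1 | h2
        · exact absurd h1 huB
        · exact Or.inr h2

private lemma burnStep' [Fintype V] (edges : E → Finset V) :
    ∀ (t : ℕ) (B : Finset V), IsLazyBurningSet edges ↑B → B.card + t ≤ Fintype.card V →
    ∃ (S : Finset E) (T : Finset V), S.card = t ∧ T.card ≤ t ∧
      ∀ h ∈ S, edges h ⊆ B ∪ T := by
  intro t
  induction t with
  | zero => exact fun B _ _ => ⟨∅, ∅, rfl, le_refl 0, by simp⟩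
  | succ n ih =>
    intro B hB hcard
    obtain ⟨S, T, hS, hT, hsub⟩ := ih B hB (by omega)
    have hB' : IsLazyBurningSet edges ↑(B ∪ T) := fun v =>
      burns_mono' (fun x hx => by
        simp only [Finset.coe_union, Set.mem_union]; exact Or.inl hx) (hB v)
    have hlt : (B ∪ T).card < Fintype.card V := by
      have := Finset.card_union_le B T
      omega
    obtain ⟨v, hv⟩ : ∃ v, v ∉ B ∪ T := by
      by_contra hcon
      push_neg at hcon
      have huniv : B ∪ T = Finset.univ := Finset.eq_univ_iff_forall.mpr hcon
      rw [huniv, Finset.card_univ] at hlt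
      omega
    rcases exists_forced' (hB' v) with hmem | ⟨e, u, huB, hue, hwall⟩
    · exact absurd hmem (by simpa using hv)
    · have huBT : u ∉ B ∪ T := by simpa using huB
      have heS : e ∉ S := fun heS => huBT (hsub e heS hue)
      refine ⟨insert e S, insert u T, ?_, ?_, ?_⟩
      · rw [Finset.card_insert_of_notMem heS, hS]
      · exact (Finset.card_insert_le _ _).trans (by omega)
      · intro h hh w hw
        rcases Finset.mem_insert.mp hh with rfl | hhS
        · by_cases hwu : w = u
          · subst hwu; exact Finset.mem_union_right _ (Finset.mem_insert_self _ _)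
          · have hw2 := hwall w hw hwu
            simp only [Finset.coe_union, Set.mem_union, Finset.mem_coe] at hw2
            rcases hw2 with h1 | h1
            · exact Finset.mem_union_left _ h1
            · exact Finset.mem_union_right _ (Finset.mem_insert_of_mem h1)
        · rcases Finset.mem_union.mp (hsub h hhS hw) with h1 | h1
          · exact Finset.mem_union_left _ h1
          · exact Finset.mem_union_right _ (Finset.mem_insert_of_mem h1)

private lemma burnCount' (edges : E → Finset V) (lam : ℕ)
    (hlam : ∀ h h' : E, h ≠ h' → ((edges h) ∩ (edges h')).card ≤ lam)
    (S : Finset E) :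
    ∑ h ∈ S, (edges h).card ≤ (S.biUnion edges).card + lam * S.card.choose 2 := by
  induction S using Finset.induction_on with
  | empty => simp
  | @insert a s ha ih =>
    have hint : (edges a ∩ s.biUnion edges).card ≤ lam * s.card := by
      have hsub : edges a ∩ s.biUnion edges ⊆ s.biUnion (fun h => edges a ∩ edges h) := by
        intro x hx
        simp only [Finset.mem_inter, Finset.mem_biUnion] at hx ⊢
        obtain ⟨hxa, h, hh, hxh⟩ := hx
        exact ⟨h, hh, hxa, hxh⟩
      calc (edges a ∩ s.biUnion edges).card
          ≤ (s.biUnion fun h => edges a ∩ edges h).card := Finset.card_le_card hsub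
        _ ≤ ∑ h ∈ s, (edges a ∩ edges h).card := Finset.card_biUnion_le
        _ ≤ ∑ _h ∈ s, lam := Finset.sum_le_sum (fun h hh => hlam a h (fun he => ha (he ▸ hh)))
        _ = lam * s.card := by rw [Finset.sum_const, smul_eq_mul, mul_comm]
    have huni := Finset.card_union_add_card_inter (edges a) (s.biUnion edges)
    have hchoose : (s.card + 1).choose 2 = s.card.choose 2 + s.card := by
      rw [show (2:ℕ) = 1 + 1 from rfl, Nat.choose_succ_succ', Nat.choose_one_right]
      omega
    rw [Finset.sum_insert ha, Finset.biUnion_insert, Finset.card_insert_of_notMem ha,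
      hchoose, Nat.mul_add]
    linarith [ih, hint, huni]

end Aux

theorem stmt6 {V E : Type*} [Fintype V] (edges : E → Finset V) (lam : ℕ)
    (hinj : Function.Injective edges)
    (hlam : ∀ h h' : E, h ≠ h' → ((edges h) ∩ (edges h')).card ≤ lam)
    (t : ℕ) (ht1 : 1 ≤ t) (ht2 : t ≤ maxCMatching edges)
    (Dbar : ℕ)
    (hD : IsLeast {s | ∃ S : Finset E, S.card = t ∧ s = ∑ h ∈ S, (edges h).card} Dbar) :
    (Dbar : ℤ) - lam * t.choose 2 - t ≤ lazyBurningNumber edges := by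
  classical
  -- obtain a C-matching of length ≥ t
  set M : Set ℕ := {k | ∃ L : List (V × E), IsCMatching edges L ∧ L.length = k} with hM
  have hne : (0:ℕ) ∈ M := by
    refine ⟨[], ⟨by simp, by simp, ?_⟩, rfl⟩
    intro i j hi hj hij
    simp at hi
  have hbdd : BddAbove M := by
    refine ⟨Fintype.card V, ?_⟩
    rintro k ⟨L, hL, rfl⟩
    calc L.length = (L.map Prod.fst).length := (List.length_map _).symm
      _ ≤ Fintype.card V := hL.2.1.length_le_card
  have hmem : maxCMatching edges ∈ M := Nat.sSup_mem ⟨0, hne⟩ hbdd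
  obtain ⟨L, hLC, hLlen⟩ := hmem
  have hidx : ∀ i : Fin t, (i : ℕ) < L.length := fun i => by
    have := i.2
    have := ht2
    omega
  set f : Fin t → V := fun i => (L.get ⟨i, hidx i⟩).1 with hf
  set g : Fin t → E := fun i => (L.get ⟨i, hidx i⟩).2 with hg
  have hfinj : Function.Injective f := by
    intro i j hij
    have hgi : (L.map Prod.fst).get ⟨i, by simpa using hidx i⟩
        = (L.map Prod.fst).get ⟨j, by simpa using hidx j⟩ := by
      simp only [List.get_eq_getElem, List.getElem_map]
      exact hij
    have hv := (hLC.2.1.get_inj_iff).mp hgi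
    exact Fin.ext (Fin.mk.inj hv)
  set T : Finset V := Finset.image f Finset.univ with hT
  have hTcard : T.card = t := by
    rw [hT, Finset.card_image_of_injective _ hfinj, Finset.card_univ, Fintype.card_fin]
  have hBmem : ∀ v, v ∉ T → Burns edges (↑(Finset.univ \ T) : Set V) v := fun v hv =>
    Burns.init v (by simp [hv])
  have key : ∀ n (j : Fin t), (j : ℕ) < n → Burns edges (↑(Finset.univ \ T) : Set V) (f j) := by
    intro n
    induction n with
    | zero => exact fun j hj => absurd hj (Nat.not_lt_zero _)
    | succ n ihn =>
      intro j hj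
      refine Burns.spread (g j) (f j) (hLC.1 _ (List.get_mem L _)) ?_
      intro u hu hune
      by_cases huT : u ∈ T
      · obtain ⟨i, -, rfl⟩ := Finset.mem_image.mp huT
        have hij : i ≠ j := fun h => hune (by rw [h])
        have hij' : (i : ℕ) < (j : ℕ) := by
          rcases lt_or_gt_of_ne (fun h : (i : ℕ) = (j : ℕ) => hij (Fin.ext h)) with h | h
          · exact h
          · exact absurd hu (hLC.2.2 j i (hidx j) (hidx i) h)
        exact ihn i (by omega)
      · exact hBmem u huT
  have hburn : IsLazyBurningSet edges (↑(Finset.univ \ T) : Set V) := by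
    intro v
    by_cases hv : v ∈ T
    · obtain ⟨j, -, rfl⟩ := Finset.mem_image.mp hv
      exact key t j j.2
    · exact hBmem v hv
  have hBcard : (Finset.univ \ T).card = Fintype.card V - t := by
    rw [Finset.card_sdiff_of_subset (Finset.subset_univ T), Finset.card_univ, hTcard]
  have htn : t ≤ Fintype.card V := by
    have h := Finset.card_le_univ T
    rw [hTcard] at h
    exact h
  have hle : lazyBurningNumber edges ≤ Fintype.card V - t :=
    Nat.sInf_le ⟨Finset.univ \ T, hBcard, hburn⟩
  -- obtain an optimal lazy burning set
  have hne2 : {n | ∃ B : Finset V, B.card = n ∧ IsLazyBurningSet edges ↑B}.Nonempty :=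
    ⟨Fintype.card V, Finset.univ, by simp, fun v => Burns.init v (by simp)⟩
  obtain ⟨B0, hB0card0, hB0⟩ := Nat.sInf_mem hne2
  have hB0card : B0.card = lazyBurningNumber edges := hB0card0
  have hcard0 : B0.card + t ≤ Fintype.card V := by
    have : lazyBurningNumber edges ≤ Fintype.card V - t := hle
    omega
  obtain ⟨S, T', hScard, hT'card, hsub⟩ := burnStep' edges t B0 hB0 hcard0
  have hsum : Dbar ≤ ∑ h ∈ S, (edges h).card := hD.2 ⟨S, hScard, rfl⟩
  have hcount := burnCount' edges lam hlam S
  rw [hScard] at hcount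
  have hU : S.biUnion edges ⊆ B0 ∪ T' := Finset.biUnion_subset.mpr hsub
  have hUc : (S.biUnion edges).card ≤ B0.card + t := by
    have h1 := Finset.card_le_card hU
    have h2 := Finset.card_union_le B0 T'
    omega
  have final : Dbar ≤ B0.card + t + lam * t.choose 2 :=
    hsum.trans (hcount.trans (Nat.add_le_add_right hUc _))
  rw [← hB0card]
  have hfinal := (Nat.cast_le (α := ℤ)).mpr final
  push_cast at hfinal ⊢
  linarith
end

section
/- If H is a linear hypergraph (any two distinct hyperedges share at most one vertex) in which every hyperedge has cardinality at least r and which has at least r hyperedges, then b_L(H) \ge \binom{r}{2}. -/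
open scoped Classical

section Aux

variable {V E : Type*}

lemma exists_fire (edges : E → Finset V) (B : Set V)
    {v : V} (hv : Burns edges B v) (U : Finset V) (hBU : ∀ x ∈ B, x ∈ U) :
    v ∈ U ∨ ∃ h : E, ∃ w : V, w ∈ edges h ∧ w ∉ U ∧ ∀ u ∈ edges h, u ≠ w → u ∈ U := by
  induction hv with
  | init v hvB => exact Or.inl (hBU v hvB)
  | spread h v hvh hall IH =>
      by_cases hcase : ∀ u ∈ edges h, u ≠ v → u ∈ U
      · by_cases hvU : v ∈ U
        · exact Or.inl hvU
        · exact Or.inr ⟨h, v, hvh, hvU, hcase⟩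
      · push_neg at hcase
        obtain ⟨u, hu, hune, huU⟩ := hcase
        rcases IH u hu hune with h1 | h2
        · exact absurd h1 huU
        · exact Or.inr h2

lemma exists_seq [Fintype E] [Nonempty E] (edges : E → Finset V) (B : Finset V)
    (hB : IsLazyBurningSet edges ↑B) (k : ℕ) :
    k ≤ Fintype.card E → ∃ g : ℕ → E,
      (∀ i, i < k → ∀ j, j < k → g i = g j → i = j) ∧
      ∀ t, t < k →
        ((edges (g t)) \ (B ∪ (Finset.range t).biUnion fun s => edges (g s))).card ≤ 1 := by
  induction k with
  | zero =>
      exact fun _ => ⟨fun _ => Classical.arbitrary E, by omega, by omega⟩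
  | succ k IH =>
      intro hk
      obtain ⟨g, hginj, hgprop⟩ := IH (by omega)
      set U : Finset V := B ∪ (Finset.range k).biUnion fun s => edges (g s) with hUdef
      have hedgesub : ∀ s, s < k → edges (g s) ⊆ U := by
        intro s hs x hx
        exact Finset.mem_union_right _ (Finset.mem_biUnion.2 ⟨s, Finset.mem_range.2 hs, hx⟩)
      have hmain : ∃ h0 : E, (∀ s, s < k → h0 ≠ g s) ∧ ((edges h0) \ U).card ≤ 1 := by
        by_cases hall : ∀ v : V, v ∈ U
        · have hex : ∃ h0 : E, h0 ∉ (Finset.range k).image g := by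
            by_contra hcon
            push_neg at hcon
            have h1 : (Finset.univ : Finset E).card ≤ ((Finset.range k).image g).card :=
              Finset.card_le_card fun x _ => hcon x
            have h2 := Finset.card_image_le (s := Finset.range k) (f := g)
            rw [Finset.card_univ, Finset.card_range] at *
            omega
          obtain ⟨h0, hh0⟩ := hex
          refine ⟨h0, fun s hs hEq =>
            hh0 (Finset.mem_image.2 ⟨s, Finset.mem_range.2 hs, hEq.symm⟩), ?_⟩
          have hempty : edges h0 \ U = ∅ := by
            rw [Finset.sdiff_eq_empty_iff_subset]
            exact fun x _ => hall x
          simp [hempty]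
        · push_neg at hall
          obtain ⟨v, hvU⟩ := hall
          rcases exists_fire edges (↑B) (hB v) U
              (fun x hx => Finset.mem_union_left _ (by exact_mod_cast hx)) with
            h1 | ⟨h0, w, hwh, hwU, hrest⟩
          · exact absurd h1 hvU
          · refine ⟨h0, fun s hs hEq => hwU (hedgesub s hs (hEq ▸ hwh)), ?_⟩
            have hsub : edges h0 \ U ⊆ {w} := by
              intro u hu
              rw [Finset.mem_sdiff] at hu
              by_contra hne
              exact hu.2 (hrest u hu.1 (by simpa using hne))
            calc (edges h0 \ U).card ≤ ({w} : Finset V).card := Finset.card_le_card hsub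
              _ = 1 := Finset.card_singleton w
      obtain ⟨h0, hh0ne, hh0card⟩ := hmain
      refine ⟨fun i => if i = k then h0 else g i, ?_, ?_⟩
      · intro i hi j hj hij
        dsimp only at hij
        by_cases hik : i = k <;> by_cases hjk : j = k
        · omega
        · rw [if_pos hik, if_neg hjk] at hij
          exact absurd hij (hh0ne j (by omega))
        · rw [if_neg hik, if_pos hjk] at hij
          exact absurd hij.symm (hh0ne i (by omega))
        · rw [if_neg hik, if_neg hjk] at hij
          exact hginj i (by omega) j (by omega) hij
      · intro t ht
        dsimp only
        have hbu : ∀ m, m ≤ k →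
            ((Finset.range m).biUnion fun s => edges (if s = k then h0 else g s)) =
            (Finset.range m).biUnion fun s => edges (g s) := by
          intro m hm
          apply Finset.biUnion_congr rfl
          intro s hs
          rw [Finset.mem_range] at hs
          rw [if_neg (by omega)]
        by_cases htk : t = k
        · rw [if_pos htk, hbu t htk.le, htk]
          exact hh0card
        · rw [if_neg htk, hbu t (by omega)]
          exact hgprop t (by omega)

lemma sumlem : ∀ k : ℕ, (∑ t ∈ Finset.range k, (k - t)) = (k + 1).choose 2
  | 0 => by simp
  | (k + 1) => by
      rw [Finset.sum_range_succ' (fun t => k + 1 - t) k]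
      have h1 : (∑ t ∈ Finset.range k, (k + 1 - (t + 1))) = ∑ t ∈ Finset.range k, (k - t) := by
        apply Finset.sum_congr rfl
        intro t _
        omega
      rw [h1, sumlem k]
      have h2 : (k + 1 + 1).choose 2 = (k + 1).choose 1 + (k + 1).choose 2 :=
        Nat.choose_succ_succ (k + 1) 1
      rw [Nat.choose_one_right] at h2
      omega

lemma card_lower [Fintype V] [Fintype E] (edges : E → Finset V) (r : ℕ)
    (hlin : ∀ h h' : E, h ≠ h' → ((edges h) ∩ (edges h')).card ≤ 1)
    (hr : ∀ h : E, r ≤ (edges h).card)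
    (hE : r ≤ Fintype.card E)
    (B : Finset V) (hB : IsLazyBurningSet edges ↑B) :
    r.choose 2 ≤ B.card := by
  rcases Nat.eq_zero_or_pos r with hr0 | hrpos
  · simp [hr0]
  have hEne : Nonempty E := Fintype.card_pos_iff.mp (lt_of_lt_of_le hrpos hE)
  obtain ⟨g, hginj, hgprop⟩ := exists_seq edges B hB (r - 1) (by omega)
  set T : ℕ → Finset V :=
    fun t => (edges (g t) ∩ B) \ ((Finset.range t).biUnion fun s => edges (g s)) with hTdef
  have hTsub : ∀ t, T t ⊆ B := by
    intro t x hx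
    rw [hTdef, Finset.mem_sdiff, Finset.mem_inter] at hx
    exact hx.1.2
  have hTcard : ∀ t, t < r - 1 → r - 1 - t ≤ (T t).card := by
    intro t ht
    set EU : Finset V := (Finset.range t).biUnion fun s => edges (g s) with hEUdef
    have hcover : edges (g t) ⊆ ((edges (g t) \ (B ∪ EU)) ∪ T t) ∪ (edges (g t) ∩ EU) := by
      intro x hx
      by_cases hxEU : x ∈ EU
      · exact Finset.mem_union_right _ (Finset.mem_inter.2 ⟨hx, hxEU⟩)
      · by_cases hxB : x ∈ B
        · refine Finset.mem_union_left _ (Finset.mem_union_right _ ?_)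
          rw [hTdef, Finset.mem_sdiff, Finset.mem_inter]
          exact ⟨⟨hx, hxB⟩, hxEU⟩
        · refine Finset.mem_union_left _ (Finset.mem_union_left _ ?_)
          rw [Finset.mem_sdiff, Finset.mem_union]
          exact ⟨hx, by tauto⟩
    have hEUcard : (edges (g t) ∩ EU).card ≤ t := by
      have hsub : edges (g t) ∩ EU ⊆
          (Finset.range t).biUnion fun s => edges (g t) ∩ edges (g s) := by
        intro x hx
        rw [Finset.mem_inter] at hx
        obtain ⟨s, hs, hxs⟩ := Finset.mem_biUnion.1 hx.2
        exact Finset.mem_biUnion.2 ⟨s, hs, Finset.mem_inter.2 ⟨hx.1, hxs⟩⟩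
      calc (edges (g t) ∩ EU).card
          ≤ ((Finset.range t).biUnion fun s => edges (g t) ∩ edges (g s)).card :=
            Finset.card_le_card hsub
        _ ≤ ∑ s ∈ Finset.range t, (edges (g t) ∩ edges (g s)).card :=
            Finset.card_biUnion_le
        _ ≤ ∑ s ∈ Finset.range t, 1 := by
            apply Finset.sum_le_sum
            intro s hs
            rw [Finset.mem_range] at hs
            refine hlin (g t) (g s) (fun hEq => ?_)
            have := hginj t (by omega) s (by omega) hEq
            omega
        _ = t := by simp
    have hdiffcard : (edges (g t) \ (B ∪ EU)).card ≤ 1 := hgprop t ht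
    have hchain : (edges (g t)).card ≤
        (edges (g t) \ (B ∪ EU)).card + (T t).card + (edges (g t) ∩ EU).card := by
      calc (edges (g t)).card
          ≤ (((edges (g t) \ (B ∪ EU)) ∪ T t) ∪ (edges (g t) ∩ EU)).card :=
            Finset.card_le_card hcover
        _ ≤ ((edges (g t) \ (B ∪ EU)) ∪ T t).card + (edges (g t) ∩ EU).card :=
            Finset.card_union_le _ _
        _ ≤ (edges (g t) \ (B ∪ EU)).card + (T t).card + (edges (g t) ∩ EU).card := by
            have := Finset.card_union_le (edges (g t) \ (B ∪ EU)) (T t)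
            omega
    have hrt := hr (g t)
    omega
  have hdisj : ∀ x ∈ Finset.range (r - 1), ∀ y ∈ Finset.range (r - 1), x ≠ y →
      Disjoint (T x) (T y) := by
    have key : ∀ x y, x < y → Disjoint (T x) (T y) := by
      intro x y hxy
      rw [Finset.disjoint_left]
      intro a hax hay
      rw [hTdef, Finset.mem_sdiff, Finset.mem_inter] at hax hay
      exact hay.2 (Finset.mem_biUnion.2 ⟨x, Finset.mem_range.2 hxy, hax.1.1⟩)
    intro x _ y _ hxy
    rcases Nat.lt_or_ge x y with h | h
    · exact key x y h
    · exact (key y x (by omega)).symm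
  have hunion : ((Finset.range (r - 1)).biUnion T).card ≤ B.card :=
    Finset.card_le_card (Finset.biUnion_subset.2 fun t _ => hTsub t)
  rw [Finset.card_biUnion hdisj] at hunion
  have hsum : (∑ t ∈ Finset.range (r - 1), (r - 1 - t)) ≤
      ∑ t ∈ Finset.range (r - 1), (T t).card := by
    apply Finset.sum_le_sum
    intro t ht
    exact hTcard t (Finset.mem_range.1 ht)
  have hval := sumlem (r - 1)
  have hch : (r - 1 + 1).choose 2 = r.choose 2 := by
    congr 1
    omega
  omega

end Aux

theorem stmt7 {V E : Type*} [Fintype V] [Fintype E] (edges : E → Finset V) (r : ℕ)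
    (hinj : Function.Injective edges)
    (hlin : ∀ h h' : E, h ≠ h' → ((edges h) ∩ (edges h')).card ≤ 1)
    (hr : ∀ h : E, r ≤ (edges h).card)
    (hE : r ≤ Fintype.card E) :
    r.choose 2 ≤ lazyBurningNumber edges := by
  apply le_csInf
  · exact ⟨(Finset.univ : Finset V).card, Finset.univ, rfl,
      fun v => Burns.init v (by simp)⟩
  · rintro n ⟨B, rfl, hB⟩
    exact card_lower edges r hlin hr hE B hB
end

section
/- Let G be a graph and B \subseteq V(G). If B is a zero forcing set for G, then B is a lazy burning set for the closed neighborhood hypergraph \mathcal{N}[G]; in particular, b_L(\mathcal{N}[G]) \le z(G). Moreover the converse fails: for the star K_{1,j} with j \ge 3, b_L(\mathcal{N}[K_{1,j}]) = 1 while z(K_{1,j}) = j - 1. -/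
open scoped Classical

section Aux

variable {α : Type*} [Fintype α] [DecidableEq α]

lemma zf_to_burn (G : SimpleGraph α) [DecidableRel G.Adj] (B : Set α)
    (h : IsZeroForcingSet G B) :
    IsLazyBurningSet (fun v => insert v (G.neighborFinset v)) B := by
  intro v
  induction h v with
  | init v hv => exact Burns.init v hv
  | force u v hu hadj hall ihu ihall =>
      refine Burns.spread u v ?_ ?_
      · simp [SimpleGraph.mem_neighborFinset, hadj]
      · intro w hw hne
        rcases Finset.mem_insert.mp hw with rfl | hw
        · exact ihu
        · exact ihall w ((SimpleGraph.mem_neighborFinset _ _ _).mp hw) hne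

lemma zf_univ (G : SimpleGraph α) : IsZeroForcingSet G ((Finset.univ : Finset α) : Set α) :=
  fun v => ZFClosure.init v (by simp)

lemma part2 (G : SimpleGraph α) [DecidableRel G.Adj] :
    lazyBurningNumber (fun v => insert v (G.neighborFinset v)) ≤ zeroForcingNumber G := by
  have hne : {n | ∃ B : Finset α, B.card = n ∧ IsZeroForcingSet G ↑B}.Nonempty :=
    ⟨(Finset.univ : Finset α).card, Finset.univ, rfl, zf_univ G⟩
  obtain ⟨B, hB, hzf⟩ := Nat.sInf_mem hne
  exact Nat.sInf_le ⟨B, hB, zf_to_burn G _ hzf⟩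

end Aux

section Star

variable {j : ℕ} (hj : 3 ≤ j)

lemma star_adj {a b : Fin (j + 1)} : (starGraph j).Adj a b ↔ a ≠ b ∧ (a = 0 ∨ b = 0) :=
  Iff.rfl

lemma star_burn_zero :
    IsLazyBurningSet (fun v : Fin (j + 1) => insert v ((starGraph j).neighborFinset v))
      ({(0 : Fin (j+1))} : Set (Fin (j+1))) := by
  intro v
  by_cases hv : v = 0
  · exact Burns.init v (by simp [hv])
  · refine Burns.spread v v (by simp) ?_
    intro u hu hne
    rcases Finset.mem_insert.mp hu with rfl | hu
    · exact absurd rfl hne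
    · have hadj : (starGraph j).Adj v u := (SimpleGraph.mem_neighborFinset _ _ _).mp hu
      have hu0 : u = 0 := by
        rcases hadj.2 with h0 | h0
        · exact absurd h0 hv
        · exact h0
      exact Burns.init u (by simp [hu0])

include hj in
lemma star_no_burn_empty (v : Fin (j + 1))
    (hb : Burns (fun v : Fin (j + 1) => insert v ((starGraph j).neighborFinset v))
      (∅ : Set (Fin (j+1))) v) : False := by
  have h10 : (⟨1, by omega⟩ : Fin (j+1)) ≠ 0 := by
    simp [Fin.ext_iff]
  induction hb with
  | init v hv => exact hv
  | spread h v hvh hall ih =>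
      by_cases hhv : h = v
      · subst hhv
        by_cases h0 : h = 0
        · exact ih ⟨1, by omega⟩
            (Finset.mem_insert_of_mem ((SimpleGraph.mem_neighborFinset _ _ _).mpr
              ⟨by simpa [h0] using h10.symm, Or.inl h0⟩)) (by simpa [h0] using h10)
        · exact ih 0
            (Finset.mem_insert_of_mem ((SimpleGraph.mem_neighborFinset _ _ _).mpr
              ⟨h0, Or.inr rfl⟩)) (fun he => h0 he.symm)
      · exact ih h (Finset.mem_insert_self _ _) hhv

include hj in
lemma star_lazy :
    lazyBurningNumber (fun v : Fin (j + 1) => insert v ((starGraph j).neighborFinset v)) = 1 := by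
  have h1 : (1 : ℕ) ∈ {n | ∃ B : Finset (Fin (j+1)), B.card = n ∧
      IsLazyBurningSet (fun v : Fin (j + 1) => insert v ((starGraph j).neighborFinset v)) ↑B} :=
    ⟨{0}, Finset.card_singleton _, by simpa using star_burn_zero (j := j)⟩
  refine le_antisymm (Nat.sInf_le h1) ?_
  rw [Nat.one_le_iff_ne_zero]
  intro h0
  rcases Nat.sInf_eq_zero.mp h0 with hmem | hemp
  · obtain ⟨B, hB, hlb⟩ := hmem
    rw [Finset.card_eq_zero] at hB
    subst hB
    exact star_no_burn_empty hj 0 (by simpa using hlb 0)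
  · exact absurd h1 (by simp [hemp])

lemma star_closure_avoids (B : Set (Fin (j+1))) (a b : Fin (j+1))
    (ha0 : a ≠ 0) (hb0 : b ≠ 0) (hab : a ≠ b) (haB : a ∉ B) (hbB : b ∉ B)
    (x : Fin (j+1)) (hx : ZFClosure (starGraph j) B x) : x ≠ a ∧ x ≠ b := by
  induction hx with
  | init v hv =>
      constructor
      · rintro rfl; exact haB hv
      · rintro rfl; exact hbB hv
  | force u v hu hadj hall ihu ihall =>
      constructor
      · rintro rfl
        have hu0 : u = 0 := by
          rcases hadj.2 with h | h
          · exact h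
          · exact absurd h ha0
        subst hu0
        exact (ihall b ⟨fun h => hb0 h.symm, Or.inl rfl⟩ (Ne.symm hab)).2 rfl
      · rintro rfl
        have hu0 : u = 0 := by
          rcases hadj.2 with h | h
          · exact h
          · exact absurd h hb0
        subst hu0
        exact (ihall a ⟨fun h => ha0 h.symm, Or.inl rfl⟩ hab).1 rfl

include hj in
lemma star_zf_upper :
    IsZeroForcingSet (starGraph j)
      ↑(Finset.univ.filter (fun i : Fin (j+1) => i ≠ 0 ∧ i ≠ ⟨1, by omega⟩)) := by
  set o : Fin (j+1) := ⟨1, by omega⟩ with ho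
  set t : Fin (j+1) := ⟨2, by omega⟩ with ht
  have ht0 : t ≠ 0 := by simp [ht, Fin.ext_iff]
  have hto : t ≠ o := by simp [ht, ho, Fin.ext_iff]
  have ho0 : o ≠ 0 := by simp [ho, Fin.ext_iff]
  have hzero : ZFClosure (starGraph j)
      ↑(Finset.univ.filter (fun i : Fin (j+1) => i ≠ 0 ∧ i ≠ o)) 0 := by
    refine ZFClosure.force t 0 (ZFClosure.init t (by simp [ht0, hto])) ⟨ht0, Or.inr rfl⟩ ?_
    intro w hw hw0
    exact absurd (hw.2.resolve_left ht0) hw0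
  intro v
  by_cases hv0 : v = 0
  · exact hv0 ▸ hzero
  by_cases hvo : v = o
  · subst hvo
    refine ZFClosure.force 0 o hzero ⟨Ne.symm ho0, Or.inl rfl⟩ ?_
    intro w hw hwo
    refine ZFClosure.init w ?_
    have hw0 : w ≠ 0 := fun h => hw.1 h.symm
    simp [hw0, hwo]
  · exact ZFClosure.init v (by simp [hv0, hvo])

include hj in
lemma star_zf_lower (B : Finset (Fin (j+1))) (hzf : IsZeroForcingSet (starGraph j) ↑B) :
    j - 1 ≤ B.card := by
  by_contra hlt
  push_neg at hlt
  have hcard : 2 ≤ ((Finset.univ.filter (fun i : Fin (j+1) => i ≠ 0)) \ B).card := by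
    have h1 : (Finset.univ.filter (fun i : Fin (j+1) => i ≠ 0)).card = j := by
      have : (Finset.univ.filter (fun i : Fin (j+1) => i ≠ 0)) = Finset.univ \ {0} := by
        ext x; simp
      rw [this, Finset.card_sdiff_of_subset (by simp)]
      simp
    have h2 : (Finset.univ.filter (fun i : Fin (j+1) => i ≠ 0)).card - B.card
        ≤ ((Finset.univ.filter (fun i : Fin (j+1) => i ≠ 0)) \ B).card :=
      Finset.le_card_sdiff _ _
    omega
  obtain ⟨a, ha, b, hb, hab⟩ := Finset.one_lt_card.mp hcard
  simp only [Finset.mem_sdiff, Finset.mem_filter, Finset.mem_univ, true_and] at ha hb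
  have := star_closure_avoids ↑B a b ha.1 hb.1 hab (by simpa using ha.2) (by simpa using hb.2)
    a (hzf a)
  exact this.1 rfl

include hj in
lemma star_zf_number : zeroForcingNumber (starGraph j) = j - 1 := by
  have hmem : (j - 1) ∈ {n | ∃ B : Finset (Fin (j+1)), B.card = n ∧
      IsZeroForcingSet (starGraph j) ↑B} := by
    refine ⟨Finset.univ.filter (fun i : Fin (j+1) => i ≠ 0 ∧ i ≠ ⟨1, by omega⟩), ?_,
      star_zf_upper hj⟩
    have : (Finset.univ.filter (fun i : Fin (j+1) => i ≠ 0 ∧ i ≠ (⟨1, by omega⟩ : Fin (j+1))))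
        = Finset.univ \ {0, ⟨1, by omega⟩} := by
      ext x; simp [and_comm]
    rw [this, Finset.card_sdiff_of_subset (by simp)]
    rw [Finset.card_pair (by simp [Fin.ext_iff])]
    simp
  refine le_antisymm (Nat.sInf_le hmem) (le_csInf ⟨_, hmem⟩ ?_)
  rintro n ⟨B, rfl, hzf⟩
  exact star_zf_lower hj B hzf

end Star

theorem stmt19 {α : Type*} [Fintype α] [DecidableEq α] (G : SimpleGraph α)
    [DecidableRel G.Adj] (B : Set α) (j : ℕ) (hj : 3 ≤ j) :
    (IsZeroForcingSet G B → IsLazyBurningSet (fun v => insert v (G.neighborFinset v)) B) ∧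
    lazyBurningNumber (fun v => insert v (G.neighborFinset v)) ≤ zeroForcingNumber G ∧
    lazyBurningNumber (fun v : Fin (j + 1) => insert v ((starGraph j).neighborFinset v)) = 1 ∧
    zeroForcingNumber (starGraph j) = j - 1 := by
  exact ⟨zf_to_burn G B, part2 G, star_lazy hj, star_zf_number hj⟩
end
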